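/- Let X, Y be Banach spaces and T ∈ B(X), S ∈ B(Y) equivalent after extension, with S compact. Then there exists a closed subspace of Y of finite codimension that is topologically isomorphic to a closed subspace of X. -/

import Mathlib

open ContinuousLinearMap


theorem riesz_ker_fd (Y : Type*) [NormedAddCommGroup Y] [NormedSpace ℂ Y]
    (K : Y →L[ℂ] Y) (hK : IsCompactOperator K) :
    FiniteDimensional ℂ (LinearMap.ker ((ContinuousLinearMap.id ℂ Y - K : Y →L[ℂ] Y) : Y →ₗ[ℂ] Y)) := by
  set N := LinearMap.ker ((ContinuousLinearMap.id ℂ Y - K : Y →L[ℂ] Y) : Y →ₗ[ℂ] Y) with hN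
  have hNclosed : IsClosed (N : Set Y) :=
    ContinuousLinearMap.isClosed_ker (ContinuousLinearMap.id ℂ Y - K)
  have hcpt : IsCompact (closure ((K : Y →ₗ[ℂ] Y) '' Metric.closedBall 0 1)) :=
    hK.isCompact_closure_image_closedBall (1 : ℝ)
  have hA : IsCompact ((N : Set Y) ∩ Metric.closedBall 0 1) := by
    apply IsCompact.of_isClosed_subset hcpt (hNclosed.inter Metric.isClosed_closedBall)
    rintro y ⟨hyN, hy1⟩
    have hKy : K y = y := by
      have h := (LinearMap.mem_ker).1 hyN
      have : y - K y = 0 := by simpa using h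
      rw [sub_eq_zero] at this; exact this.symm
    exact subset_closure ⟨y, hy1, hKy⟩
  have hball : IsCompact (Metric.closedBall (0 : N) 1) := by
    rw [Topology.IsEmbedding.isCompact_iff (Topology.IsEmbedding.subtypeVal)]
    have himg : Subtype.val '' (Metric.closedBall (0 : N) 1)
        = (N : Set Y) ∩ Metric.closedBall 0 1 := by
      ext y
      constructor
      · rintro ⟨z, hz, rfl⟩
        refine ⟨z.2, ?_⟩
        simpa [Metric.mem_closedBall, dist_eq_norm] using hz
      · rintro ⟨hyN, hy1⟩
        refine ⟨⟨y, hyN⟩, ?_, rfl⟩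
        simpa [Metric.mem_closedBall, dist_eq_norm] using hy1
    rw [himg]; exact hA
  exact FiniteDimensional.of_isCompact_closedBall₀ ℂ zero_lt_one hball


-- bounded below lemma
theorem bdd_below_aux (X Y : Type*) [NormedAddCommGroup X] [NormedSpace ℂ X]
    [NormedAddCommGroup Y] [NormedSpace ℂ Y]
    (K : Y →L[ℂ] Y) (hK : IsCompactOperator K) (B : X →L[ℂ] Y) (C : Y →L[ℂ] X)
    (key : ∀ y : Y, y = K y + B (C y))
    (Y₁ : Submodule ℂ Y) (hY₁ : IsClosed (Y₁ : Set Y))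
    (hdisj : ∀ y ∈ Y₁, K y = y → y = 0) :
    ∃ c : ℝ, 0 < c ∧ ∀ y ∈ Y₁, c * ‖y‖ ≤ ‖C y‖ := by
  by_contra hcon
  push_neg at hcon
  have hseq : ∀ n : ℕ, ∃ u : Y, u ∈ Y₁ ∧ ‖u‖ = 1 ∧ ‖C u‖ < 1 / (n + 1) := by
    intro n
    obtain ⟨y, hyY, hy⟩ := hcon (1 / (n + 1)) (by positivity)
    have hy0 : y ≠ 0 := by
      rintro rfl; simp at hy
    have hny : ‖((‖y‖ : ℂ))⁻¹‖ = ‖y‖⁻¹ := by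
      rw [norm_inv]
      simp
    refine ⟨((‖y‖ : ℂ))⁻¹ • y, Y₁.smul_mem _ hyY, ?_, ?_⟩
    · rw [norm_smul, hny, inv_mul_cancel₀ (norm_ne_zero_iff.2 hy0)]
    · rw [map_smul, norm_smul, hny]
      calc ‖y‖⁻¹ * ‖C y‖ < ‖y‖⁻¹ * (1 / (n + 1) * ‖y‖) := by
            exact mul_lt_mul_of_pos_left hy (inv_pos.2 (norm_pos_iff.2 hy0))
        _ = 1 / (n + 1) := by
            field_simp
  choose u huY hunorm huC using hseq
  have huball : ∀ n, u n ∈ Metric.closedBall (0 : Y) 1 := fun n => by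
    simp [Metric.mem_closedBall, dist_eq_norm, hunorm n]
  have hcpt : IsCompact (closure ((K : Y →ₗ[ℂ] Y) '' Metric.closedBall 0 1)) :=
    hK.isCompact_closure_image_closedBall (1 : ℝ)
  have hmem : ∀ n, K (u n) ∈ closure ((K : Y →ₗ[ℂ] Y) '' Metric.closedBall 0 1) :=
    fun n => subset_closure ⟨u n, huball n, rfl⟩
  obtain ⟨a, -, φ, hφ, hconv⟩ := hcpt.tendsto_subseq hmem
  -- C (u n) → 0
  have hCu : Filter.Tendsto (fun n => C (u n)) Filter.atTop (nhds 0) := by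
    rw [tendsto_iff_norm_sub_tendsto_zero]
    simp only [sub_zero]
    apply squeeze_zero (fun n => norm_nonneg _) (fun n => (huC n).le)
    exact tendsto_one_div_add_atTop_nhds_zero_nat
  have hBCu : Filter.Tendsto (fun n => B (C (u n))) Filter.atTop (nhds 0) := by
    have := (B.continuous.tendsto 0).comp hCu
    simpa [Function.comp_def] using this
  have huconv : Filter.Tendsto (fun n => u (φ n)) Filter.atTop (nhds a) := by
    have h1 : Filter.Tendsto (fun n => K (u (φ n)) + B (C (u (φ n)))) Filter.atTop
        (nhds (a + 0)) := hconv.add (hBCu.comp hφ.tendsto_atTop)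
    rw [add_zero] at h1
    convert h1 using 2 with n
    exact key (u (φ n))
  have haY₁ : a ∈ Y₁ := hY₁.mem_of_tendsto huconv (Filter.Eventually.of_forall fun n => huY _)
  have hanorm : ‖a‖ = 1 := by
    have := ((continuous_norm).tendsto a).comp huconv
    have h2 : Filter.Tendsto (fun n => ‖u (φ n)‖) Filter.atTop (nhds 1) := by
      have he : (fun n => ‖u (φ n)‖) = fun _ => (1 : ℝ) := funext fun n => hunorm _
      rw [he]; exact tendsto_const_nhds
    exact tendsto_nhds_unique (this) h2
  have hKa : K a = a := by
    have hCa : C a = 0 :=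
      tendsto_nhds_unique ((C.continuous.tendsto a).comp huconv) (hCu.comp hφ.tendsto_atTop)
    have := key a
    rw [hCa, map_zero, add_zero] at this
    exact this.symm
  have : a = 0 := hdisj a haY₁ hKa
  rw [this, norm_zero] at hanorm
  exact one_ne_zero hanorm.symm

/-- If `T ∈ B(X)` is equivalent after extension to a compact `S ∈ B(Y)`,
then some closed finite codimensional subspace of `Y` is topologically isomorphic to a
closed subspace of `X`. -/
theorem finite_codim_subspace_embeds_of_eae_compact
    (X Y : Type*) [NormedAddCommGroup X] [NormedSpace ℂ X] [CompleteSpace X]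
    [NormedAddCommGroup Y] [NormedSpace ℂ Y] [CompleteSpace Y]
    (T : X →L[ℂ] X) (S : Y →L[ℂ] Y) (hS : IsCompactOperator S)
    (hEAE : ∃ (E : (Y × X) ≃L[ℂ] (X × Y)) (F : (X × Y) ≃L[ℂ] (Y × X)),
      T.prodMap (ContinuousLinearMap.id ℂ Y) =
        (E : (Y × X) →L[ℂ] (X × Y)) ∘L
          (S.prodMap (ContinuousLinearMap.id ℂ X)) ∘L
            (F : (X × Y) →L[ℂ] (Y × X))) :
    ∃ (Y₁ : Submodule ℂ Y), IsClosed (Y₁ : Set Y) ∧ FiniteDimensional ℂ (Y ⧸ Y₁) ∧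
      ∃ (X₁ : Submodule ℂ X), IsClosed (X₁ : Set X) ∧ Nonempty (Y₁ ≃L[ℂ] X₁) := by
  classical
  obtain ⟨E, F, hEF⟩ := hEAE
  -- the operators
  let G : Y →L[ℂ] Y :=
    (fst ℂ Y X) ∘L ((F : (X × Y) →L[ℂ] (Y × X)) ∘L (inr ℂ X Y))
  let C : Y →L[ℂ] X :=
    (snd ℂ Y X) ∘L ((F : (X × Y) →L[ℂ] (Y × X)) ∘L (inr ℂ X Y))
  let B : X →L[ℂ] Y :=
    (snd ℂ X Y) ∘L ((E : (Y × X) →L[ℂ] (X × Y)) ∘L (inr ℂ Y X))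
  let A : Y →L[ℂ] Y :=
    (snd ℂ X Y) ∘L ((E : (Y × X) →L[ℂ] (X × Y)) ∘L (inl ℂ Y X))
  let K : Y →L[ℂ] Y := A ∘L (S ∘L G)
  have hK : IsCompactOperator K := by
    have h1 : IsCompactOperator (⇑S ∘ ⇑G) := hS.comp_clm G
    have h2 : IsCompactOperator (⇑A ∘ (⇑S ∘ ⇑G)) := h1.continuous_comp A.continuous
    exact h2
  -- the key identity
  have key : ∀ y : Y, y = K y + B (C y) := by
    intro y
    have h2 := congrArg Prod.snd (DFunLike.congr_fun hEF ((0 : X), y))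
    have hsplit : ((S ((F ((0 : X), y)).1), ((F ((0 : X), y)).2)) : Y × X)
        = (S ((F ((0 : X), y)).1), (0 : X)) + ((0 : Y), (F ((0 : X), y)).2) := by
      simp
    have hEadd : (E ((S ((F ((0 : X), y)).1), ((F ((0 : X), y)).2)) : Y × X)).2
        = K y + B (C y) := by
      rw [hsplit, map_add, Prod.snd_add]
      rfl
    exact h2.trans hEadd
  -- the kernel
  set N := LinearMap.ker ((ContinuousLinearMap.id ℂ Y - K : Y →L[ℂ] Y) : Y →ₗ[ℂ] Y) with hNdef
  haveI hNfd : FiniteDimensional ℂ N := riesz_ker_fd Y K hK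
  have hcc : N.ClosedComplemented := Submodule.ClosedComplemented.of_finiteDimensional N
  obtain ⟨Y₁, hY₁closed, hcompl⟩ := hcc.exists_isClosed_isCompl
  refine ⟨Y₁, hY₁closed, ?_, ?_⟩
  · have e : (Y ⧸ Y₁) ≃ₗ[ℂ] N := Submodule.quotientEquivOfIsCompl Y₁ N hcompl.symm
    exact Module.Finite.equiv e.symm
  · -- bounded below
    have hdisj : ∀ y ∈ Y₁, K y = y → y = 0 := by
      intro y hyY₁ hKy
      have hyN : y ∈ N := by
        rw [hNdef, LinearMap.mem_ker]
        simp [hKy]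
      exact (Submodule.disjoint_def.1 hcompl.disjoint) y hyN hyY₁
    obtain ⟨c, hc, hbdd⟩ := bdd_below_aux X Y K hK B C key Y₁ hY₁closed hdisj
    let Cr : Y₁ →L[ℂ] X := C ∘L Y₁.subtypeL
    have hbdd' : ∀ y : Y₁, ‖(y : Y₁)‖ ≤ (Real.toNNReal c)⁻¹ * ‖Cr y‖ := by
      intro y
      have h := hbdd (y : Y) y.2
      have hcoe : ((Real.toNNReal c)⁻¹ : NNReal) = (c⁻¹ : ℝ) := by
        rw [NNReal.coe_inv, Real.coe_toNNReal c hc.le]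
      calc ‖(y : Y₁)‖ = c⁻¹ * (c * ‖(y : Y₁)‖) := by
            field_simp
        _ ≤ c⁻¹ * ‖Cr y‖ := by
            apply mul_le_mul_of_nonneg_left _ (inv_nonneg.2 hc.le)
            exact h
        _ = ((Real.toNNReal c)⁻¹ : NNReal) * ‖Cr y‖ := by rw [hcoe]
    have hanti : AntilipschitzWith (Real.toNNReal c)⁻¹ Cr :=
      AddMonoidHomClass.antilipschitz_of_bound Cr hbdd'
    haveI : CompleteSpace Y₁ := hY₁closed.completeSpace_coe
    set X₁ : Submodule ℂ X := Y₁.map (C : Y →ₗ[ℂ] X) with hX₁def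
    have hrange : Set.range Cr = (X₁ : Set X) := by
      ext x
      constructor
      · rintro ⟨y, rfl⟩
        exact ⟨(y : Y), y.2, rfl⟩
      · rintro ⟨y, hy, rfl⟩
        exact ⟨⟨y, hy⟩, rfl⟩
    have hX₁closed : IsClosed (X₁ : Set X) := by
      rw [← hrange]
      exact hanti.isClosed_range Cr.uniformContinuous
    haveI : CompleteSpace X₁ := hX₁closed.completeSpace_coe
    refine ⟨X₁, hX₁closed, ?_⟩
    let g : Y₁ →L[ℂ] X₁ := Cr.codRestrict X₁ fun y => Submodule.mem_map_of_mem y.2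
    have hinj : LinearMap.ker (g : Y₁ →ₗ[ℂ] X₁) = ⊥ := by
      rw [Submodule.eq_bot_iff]
      intro a ha
      have h0 : Cr a = 0 := congrArg Subtype.val (LinearMap.mem_ker.1 ha)
      exact hanti.injective (show Cr a = Cr 0 by rw [map_zero, h0])
    have hsurj : LinearMap.range (g : Y₁ →ₗ[ℂ] X₁) = ⊤ := by
      rw [LinearMap.range_eq_top]
      rintro ⟨x, hx⟩
      obtain ⟨y, hy, rfl⟩ := hx
      exact ⟨⟨y, hy⟩, rfl⟩
    exact ⟨ContinuousLinearEquiv.ofBijective g hinj hsurj⟩
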